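/- Let f ∈ V, set f̄ := T* f, let ū ∈ H satisfy G ū = f̄, assume G ≠ 0 and let 0 < α* < 2/‖G*G‖. Define the damped Richardson iteration on the normal equations by x₀ := 0 and x_{i+1} := x_i − α*·G*(G x_i − f̄) for i ≥ 0. Then there exists ρ with 0 ≤ ρ < 1 such that ‖P ū − x_i‖ ≤ ρⁱ·‖P ū‖ for all i ≥ 0; in particular the iterates x_i converge in H to P ū. -/

import Mathlib

open scoped RealInnerProductSpace
open Filter Topology

set_option maxHeartbeats 1000000 in
/-- The damped Richardson iteration on the normal equations,
`x₀ = 0`, `x_{i+1} = x_i − α* G*(G x_i − T* f)`, converges linearly to `P ubar`,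
where `ubar` is any solution of `G ubar = T* f`. -/
theorem richardson_iteration_converges
    {V H : Type*} [NormedAddCommGroup V] [InnerProductSpace ℝ V] [CompleteSpace V]
    [NormedAddCommGroup H] [InnerProductSpace ℝ H] [CompleteSpace H]
    (B : V →L[ℝ] V) (α : ℝ) (hα : 0 < α)
    (hB : ∀ v : V, α * ‖v‖ ^ 2 ≤ ⟪B v, v⟫)
    (T : H →L[ℝ] V) (hT : Function.Surjective T)
    (G : H →L[ℝ] H) (hG : G = (ContinuousLinearMap.adjoint T).comp (B.comp T))
    (G₂ : H →L[ℝ] H) (hG₂ : G₂ = (ContinuousLinearMap.adjoint G).comp G)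
    (P : H →L[ℝ] H)
    (hP : ∀ x : H, P x ∈ (LinearMap.ker (T : H →ₗ[ℝ] V))ᗮ ∧ x - P x ∈ LinearMap.ker (T : H →ₗ[ℝ] V))
    (hGne : G ≠ 0)
    (αs : ℝ) (hαs : 0 < αs) (hαs' : αs < 2 / ‖G₂‖)
    (f : V) (ubar : H) (hubar : G ubar = ContinuousLinearMap.adjoint T f) :
    ∃ ρ : ℝ, 0 ≤ ρ ∧ ρ < 1 ∧
      ∀ x : ℕ → H, x 0 = 0 →
        (∀ i : ℕ, x (i + 1) = x i - αs •
          (ContinuousLinearMap.adjoint G (G (x i) - ContinuousLinearMap.adjoint T f))) →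
        (∀ i : ℕ, ‖P ubar - x i‖ ≤ ρ ^ i * ‖P ubar‖) ∧
        Tendsto x atTop (𝓝 (P ubar)) := by
  have hGnorm : 0 < ‖G‖ := norm_pos_iff.2 hGne
  have hG₂norm : ‖G₂‖ = ‖G‖ * ‖G‖ := by
    rw [hG₂]; exact ContinuousLinearMap.norm_adjoint_comp_self G
  have hαsG : αs * (‖G‖ * ‖G‖) < 2 := by
    have : 0 < ‖G₂‖ := by rw [hG₂norm]; positivity
    rw [← hG₂norm]
    calc αs * ‖G₂‖ < (2 / ‖G₂‖) * ‖G₂‖ := by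
          exact mul_lt_mul_of_pos_right hαs' this
      _ = 2 := by field_simp
  -- kernel of T is contained in kernel of G
  have hkerG : ∀ z : H, T z = 0 → G z = 0 := by
    intro z hz; rw [hG]; simp [hz]
  -- adjoint of G maps into (ker T)ᗮ
  have hadj : ∀ y : H, ContinuousLinearMap.adjoint G y ∈ (LinearMap.ker (T : H →ₗ[ℝ] V))ᗮ := by
    intro y
    rw [Submodule.mem_orthogonal]
    intro u hu
    have hu' : T u = 0 := hu
    rw [ContinuousLinearMap.adjoint_inner_right, hkerG u hu', inner_zero_left]
  -- T is bounded below on (ker T)ᗮ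
  obtain ⟨C, hC0, hC⟩ := ContinuousLinearMap.exists_preimage_norm_le T hT
  have hlow : ∀ e ∈ (LinearMap.ker (T : H →ₗ[ℝ] V))ᗮ, ‖e‖ ≤ C * ‖T e‖ := by
    intro e he
    obtain ⟨e', he', he'n⟩ := hC (T e)
    have hker : e - e' ∈ LinearMap.ker (T : H →ₗ[ℝ] V) := by
      simp [LinearMap.mem_ker, he']
    have h1 : ⟪e, e⟫ = ⟪e, e'⟫ := by
      have h0 : ⟪e - e', e⟫ = 0 := (Submodule.mem_orthogonal _ _).1 he _ hker
      rw [inner_sub_left] at h0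
      have hc := real_inner_comm e e'
      linarith
    have h2 : ‖e‖ * ‖e‖ ≤ ‖e‖ * ‖e'‖ := by
      calc ‖e‖ * ‖e‖ = ⟪e, e⟫ := (real_inner_self_eq_norm_mul_norm e).symm
        _ = ⟪e, e'⟫ := h1
        _ ≤ ‖e‖ * ‖e'‖ := real_inner_le_norm e e'
    rcases eq_or_lt_of_le (norm_nonneg e) with h | h
    · rw [← h]; positivity
    · exact le_of_mul_le_mul_left h2 h |>.trans he'n
  -- coercivity of G on (ker T)ᗮ
  set β : ℝ := α / (C * C) with hβdef
  have hβ : 0 < β := by positivity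
  have hcoer : ∀ e ∈ (LinearMap.ker (T : H →ₗ[ℝ] V))ᗮ, β * ‖e‖ ^ 2 ≤ ⟪G e, e⟫ := by
    intro e he
    have h1 : ⟪G e, e⟫ = ⟪B (T e), T e⟫ := by
      rw [hG]
      simp only [ContinuousLinearMap.coe_comp', Function.comp_apply]
      rw [ContinuousLinearMap.adjoint_inner_left]
    have h2 : ‖e‖ ^ 2 ≤ C ^ 2 * ‖T e‖ ^ 2 := by
      have := hlow e he
      calc ‖e‖ ^ 2 ≤ (C * ‖T e‖) ^ 2 := by
            apply pow_le_pow_left₀ (norm_nonneg _) this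
        _ = C ^ 2 * ‖T e‖ ^ 2 := by ring
    rw [h1]
    calc β * ‖e‖ ^ 2 ≤ β * (C ^ 2 * ‖T e‖ ^ 2) := by
          exact mul_le_mul_of_nonneg_left h2 hβ.le
      _ = α * ‖T e‖ ^ 2 := by rw [hβdef]; field_simp
      _ ≤ ⟪B (T e), T e⟫ := hB _
  -- hence ‖G e‖ ≥ β ‖e‖ on (ker T)ᗮ
  have hGlow : ∀ e ∈ (LinearMap.ker (T : H →ₗ[ℝ] V))ᗮ, β * ‖e‖ ≤ ‖G e‖ := by
    intro e he
    rcases eq_or_lt_of_le (norm_nonneg e) with h | h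
    · rw [← h]; simp
    · have h1 : β * ‖e‖ ^ 2 ≤ ‖G e‖ * ‖e‖ := (hcoer e he).trans (real_inner_le_norm _ _)
      have : β * ‖e‖ * ‖e‖ ≤ ‖G e‖ * ‖e‖ := by nlinarith
      exact le_of_mul_le_mul_right this h
  -- inner product with G₂
  have hG₂inner : ∀ e : H, ⟪G₂ e, e⟫ = ‖G e‖ ^ 2 := by
    intro e
    rw [hG₂]
    simp only [ContinuousLinearMap.coe_comp', Function.comp_apply]
    rw [ContinuousLinearMap.adjoint_inner_left, real_inner_self_eq_norm_sq]
  -- the contraction constant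
  set δ : ℝ := αs * (2 - αs * (‖G‖ * ‖G‖)) * β ^ 2 with hδdef
  have hδpos : 0 < δ := by
    apply mul_pos (mul_pos hαs (by linarith)) (by positivity)
  set ρ : ℝ := Real.sqrt (max 0 (1 - δ)) with hρdef
  have hρ0 : 0 ≤ ρ := Real.sqrt_nonneg _
  have hρsq : ρ ^ 2 = max 0 (1 - δ) := Real.sq_sqrt (le_max_left _ _)
  have hρ1 : ρ < 1 := by
    have h1 : Real.sqrt (max 0 (1 - δ)) < Real.sqrt 1 :=
      Real.sqrt_lt_sqrt (le_max_left _ _) (by rw [max_lt_iff]; constructor <;> linarith)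
    simpa [Real.sqrt_one] using h1
  -- key contraction estimate on (ker T)ᗮ
  have hcontr : ∀ e ∈ (LinearMap.ker (T : H →ₗ[ℝ] V))ᗮ, ‖e - αs • G₂ e‖ ≤ ρ * ‖e‖ := by
    intro e he
    have hsq : ‖e - αs • G₂ e‖ ^ 2 ≤ (ρ * ‖e‖) ^ 2 := by
      have hexp : ‖e - αs • G₂ e‖ ^ 2
          = ‖e‖ ^ 2 - 2 * (αs * ⟪G₂ e, e⟫) + αs ^ 2 * ‖G₂ e‖ ^ 2 := by
        rw [norm_sub_sq_real, real_inner_smul_right, norm_smul,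
          Real.norm_eq_abs, abs_of_pos hαs, mul_pow, real_inner_comm e (G₂ e)]
      have hG₂e : ‖G₂ e‖ ^ 2 ≤ (‖G‖ * ‖G‖) * ⟪G₂ e, e⟫ := by
        have h1 : ‖G₂ e‖ ≤ ‖G‖ * ‖G e‖ := by
          rw [hG₂]
          simp only [ContinuousLinearMap.coe_comp', Function.comp_apply]
          calc ‖ContinuousLinearMap.adjoint G (G e)‖
              ≤ ‖ContinuousLinearMap.adjoint G‖ * ‖G e‖ :=
                ContinuousLinearMap.le_opNorm (ContinuousLinearMap.adjoint G) (G e)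
            _ = ‖G‖ * ‖G e‖ := by rw [LinearIsometryEquiv.norm_map]
        calc ‖G₂ e‖ ^ 2 ≤ (‖G‖ * ‖G e‖) ^ 2 :=
              pow_le_pow_left₀ (norm_nonneg _) h1 2
          _ = (‖G‖ * ‖G‖) * ‖G e‖ ^ 2 := by ring
          _ = (‖G‖ * ‖G‖) * ⟪G₂ e, e⟫ := by rw [hG₂inner]
      have hco : β ^ 2 * ‖e‖ ^ 2 ≤ ⟪G₂ e, e⟫ := by
        rw [hG₂inner]
        have h2 : (β * ‖e‖) * (β * ‖e‖) ≤ ‖G e‖ * ‖G e‖ :=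
          mul_le_mul (hGlow e he) (hGlow e he) (by positivity) (norm_nonneg _)
        nlinarith [h2]
      have key : ‖e - αs • G₂ e‖ ^ 2 ≤ (1 - δ) * ‖e‖ ^ 2 := by
        rw [hexp, hδdef]
        nlinarith [hG₂e, hco, hαs.le, mul_pos hαs (show (0:ℝ) < 2 - αs * (‖G‖*‖G‖) by linarith)]
      calc ‖e - αs • G₂ e‖ ^ 2 ≤ (1 - δ) * ‖e‖ ^ 2 := key
        _ ≤ max 0 (1 - δ) * ‖e‖ ^ 2 := by
            apply mul_le_mul_of_nonneg_right (le_max_right _ _) (by positivity)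
        _ = (ρ * ‖e‖) ^ 2 := by rw [mul_pow, hρsq]
    have h := Real.sqrt_le_sqrt hsq
    rwa [Real.sqrt_sq (norm_nonneg _), Real.sqrt_sq (by positivity)] at h
  refine ⟨ρ, hρ0, hρ1, ?_⟩
  intro x hx0 hxrec
  -- G ubar = G (P ubar)
  have hGP : G (P ubar) = ContinuousLinearMap.adjoint T f := by
    have h1 : G (ubar - P ubar) = 0 := hkerG _ (hP ubar).2
    rw [map_sub, sub_eq_zero] at h1
    rw [← h1]; exact hubar
  have key : ∀ i : ℕ, (P ubar - x i ∈ (LinearMap.ker (T : H →ₗ[ℝ] V))ᗮ) ∧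
      ‖P ubar - x i‖ ≤ ρ ^ i * ‖P ubar‖ := by
    intro i
    induction i with
    | zero => simpa [hx0] using (hP ubar).1
    | succ i ih =>
      obtain ⟨hmem, hnorm⟩ := ih
      set e := P ubar - x i with he
      have hstep : P ubar - x (i + 1) = e - αs • G₂ e := by
        rw [hxrec i, ← hGP]
        have h1 : G (x i) - G (P ubar) = -(G e) := by
          rw [he, map_sub]; abel
        rw [h1, hG₂]
        simp only [ContinuousLinearMap.coe_comp', Function.comp_apply]
        rw [map_neg, smul_neg, he]
        abel
      constructor
      · rw [hstep]
        exact Submodule.sub_mem _ hmem (Submodule.smul_mem _ _ (by rw [hG₂]; exact hadj _))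
      · rw [hstep]
        calc ‖e - αs • G₂ e‖ ≤ ρ * ‖e‖ := hcontr e hmem
          _ ≤ ρ * (ρ ^ i * ‖P ubar‖) := mul_le_mul_of_nonneg_left hnorm hρ0
          _ = ρ ^ (i + 1) * ‖P ubar‖ := by ring
  refine ⟨fun i => (key i).2, ?_⟩
  rw [tendsto_iff_norm_sub_tendsto_zero]
  have hb : Tendsto (fun i : ℕ => ρ ^ i * ‖P ubar‖) atTop (𝓝 0) := by
    simpa using (tendsto_pow_atTop_nhds_zero_of_lt_one hρ0 hρ1).mul_const ‖P ubar‖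
  exact squeeze_zero (fun i => norm_nonneg _)
    (fun i => by rw [norm_sub_rev]; exact (key i).2) hb
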